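/- Let p be a prime and define the polynomial T_p(n, x) = Σ_{m=0}^{n} x^{ν_p(C(n,m))}. For n ≥ 1 and d ∈ {0,…,p−1}, T_p(p·n + d, x) = (d + 1)·T_p(n, x) + (p − d − 1)·x^{ν_p(n)+1}·T_p(n − 1, x). -/

import Mathlib

open Polynomial

/-- `T p n` is the polynomial `∑_{m=0}^{n} x^{ν_p(C(n,m))}`. -/
noncomputable def T (p n : ℕ) : Polynomial ℤ :=
  ∑ m ∈ Finset.range (n + 1), X ^ padicValNat p (n.choose m)

private lemma fact_val (p : ℕ) [Fact p.Prime] (a r : ℕ) (hr : r < p) :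
    padicValNat p (p * a + r).factorial = padicValNat p a.factorial + a := by
  rw [padicValNat_factorial_mul_add a hr, padicValNat_factorial_mul]

private lemma choose_val (p : ℕ) [Fact p.Prime] {k n : ℕ} (h : k ≤ n) :
    padicValNat p n.factorial =
      padicValNat p (n.choose k) + padicValNat p k.factorial
        + padicValNat p (n - k).factorial := by
  have h1 : n.choose k * k.factorial * (n - k).factorial = n.factorial :=
    Nat.choose_mul_factorial_mul_factorial h
  rw [← h1, padicValNat.mul (Nat.mul_ne_zero (Nat.choose_pos h).ne'
    (Nat.factorial_ne_zero k)) (Nat.factorial_ne_zero _),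
    padicValNat.mul (Nat.choose_pos h).ne' (Nat.factorial_ne_zero k)]

private lemma valA (p : ℕ) (hp : p.Prime) {n d m e : ℕ} (hd : d < p) (he : e ≤ d)
    (hm : m ≤ n) :
    padicValNat p ((p * n + d).choose (p * m + e)) = padicValNat p (n.choose m) := by
  haveI := Fact.mk hp
  obtain ⟨k, rfl⟩ := Nat.exists_eq_add_of_le hm
  have hmk : p * (m + k) = p * m + p * k := Nat.mul_add p m k
  have hle : p * m + e ≤ p * (m + k) + d := by omega
  have hsub : p * (m + k) + d - (p * m + e) = p * k + (d - e) := by omega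
  have h1 := choose_val p hle
  have h2 := choose_val p hm
  rw [hsub] at h1
  rw [fact_val p (m + k) d hd, fact_val p m e (lt_of_le_of_lt he hd),
    fact_val p k (d - e) (by omega)] at h1
  rw [show m + k - m = k by omega] at h2
  omega

private lemma valB (p : ℕ) (hp : p.Prime) {n d m e : ℕ} (hd : d < p) (he1 : d < e)
    (he2 : e < p) (hm : m < n) :
    padicValNat p ((p * n + d).choose (p * m + e)) =
      padicValNat p n + 1 + padicValNat p ((n - 1).choose m) := by
  haveI := Fact.mk hp
  obtain ⟨k, rfl⟩ : ∃ k, n = m + 1 + k := ⟨n - m - 1, by omega⟩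
  have hmk : p * (m + 1 + k) = p * m + p + p * k := by ring
  have hle : p * m + e ≤ p * (m + 1 + k) + d := by omega
  have hsub : p * (m + 1 + k) + d - (p * m + e) = p * k + (p + d - e) := by omega
  have h1 := choose_val p hle
  have hm' : m ≤ m + 1 + k - 1 := by omega
  have h2 := choose_val p hm'
  rw [hsub] at h1
  rw [fact_val p (m + 1 + k) d hd, fact_val p m e he2,
    fact_val p k (p + d - e) (by omega)] at h1
  rw [show m + 1 + k - 1 = m + k by omega, show m + k - m = k by omega] at h2
  have h3 : padicValNat p (m + 1 + k).factorial =
      padicValNat p (m + 1 + k) + padicValNat p (m + k).factorial := by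
    rw [show m + 1 + k = (m + k) + 1 by omega, Nat.factorial_succ,
      padicValNat.mul (by omega) (Nat.factorial_ne_zero _)]
  rw [show m + 1 + k - 1 = m + k by omega]
  omega

private lemma sum_split {M : Type*} [AddCommMonoid M] (f : ℕ → M) (p : ℕ) :
    ∀ a : ℕ, ∑ i ∈ Finset.range (p * a), f i =
      ∑ m ∈ Finset.range a, ∑ e ∈ Finset.range p, f (p * m + e)
  | 0 => by simp
  | a + 1 => by
    rw [Nat.mul_add, Nat.mul_one, Finset.sum_range_add, sum_split f p a,
      Finset.sum_range_succ]

theorem T_recurrence (p : ℕ) (hp : p.Prime) (n d : ℕ) (hn : 1 ≤ n) (hd : d < p) :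
    T p (p * n + d) =
      C ((d : ℤ) + 1) * T p n +
      C ((p : ℤ) - d - 1) * X ^ (padicValNat p n + 1) * T p (n - 1) := by
  haveI := Fact.mk hp
  set N := p * n + d with hN
  have hp1 : 1 ≤ p := hp.one_le
  set f : ℕ → Polynomial ℤ := fun i => X ^ padicValNat p (N.choose i) with hf
  set g : ℕ → Polynomial ℤ := fun i => if i ≤ N then f i else 0 with hg
  have hpn1 : p * (n + 1) = p * n + p := Nat.mul_succ p n
  have hstep : T p N = ∑ i ∈ Finset.range (p * (n + 1)), g i := by
    rw [T]
    rw [show Finset.range (p * (n + 1)) =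
        Finset.range (N + 1) ∪ Finset.Ico (N + 1) (p * (n + 1)) by
      rw [Finset.range_eq_Ico, Finset.range_eq_Ico, Finset.Ico_union_Ico_eq_Ico (by omega) (by omega)]]
    rw [Finset.sum_union (by
      rw [Finset.range_eq_Ico]
      exact Finset.Ico_disjoint_Ico_consecutive 0 (N + 1) _)]
    have h1 : ∑ i ∈ Finset.range (N + 1), g i = ∑ i ∈ Finset.range (N + 1), f i := by
      apply Finset.sum_congr rfl
      intro i hi
      rw [Finset.mem_range] at hi
      simp [hg, Nat.lt_succ_iff.mp hi]
    have h2 : ∑ i ∈ Finset.Ico (N + 1) (p * (n + 1)), g i = 0 := by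
      apply Finset.sum_eq_zero
      intro i hi
      rw [Finset.mem_Ico] at hi
      simp [hg, show ¬ i ≤ N by omega]
    rw [h1, h2, add_zero]
  rw [hstep, sum_split g p (n + 1)]
  have hinner : ∀ m ∈ Finset.range (n + 1),
      ∑ e ∈ Finset.range p, g (p * m + e) =
        (d + 1) • X ^ padicValNat p (n.choose m) +
        (if m < n then (p - d - 1) •
          (X ^ (padicValNat p n + 1) * X ^ padicValNat p ((n - 1).choose m)) else 0) := by
    intro m hm
    rw [Finset.mem_range, Nat.lt_succ_iff] at hm
    have hmn : p * m ≤ p * n := Nat.mul_le_mul_left p hm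
    rw [show Finset.range p = Finset.range (d + 1) ∪ Finset.Ico (d + 1) p by
      rw [Finset.range_eq_Ico, Finset.range_eq_Ico, Finset.Ico_union_Ico_eq_Ico (by omega) (by omega)]]
    rw [Finset.sum_union (by
      rw [Finset.range_eq_Ico]
      exact Finset.Ico_disjoint_Ico_consecutive 0 (d + 1) p)]
    congr 1
    · have hpt : ∀ e ∈ Finset.range (d + 1), g (p * m + e) =
          X ^ padicValNat p (n.choose m) := by
        intro e he
        rw [Finset.mem_range] at he
        have hle : p * m + e ≤ N := by omega
        simp only [hg, hf, if_pos hle]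
        rw [hN, valA p hp hd (by omega) hm]
      rw [Finset.sum_congr rfl hpt, Finset.sum_const, Finset.card_range]
    · by_cases hmn' : m < n
      · have hmn2 : p * (m + 1) ≤ p * n := Nat.mul_le_mul_left p hmn'
        have hmk : p * (m + 1) = p * m + p := Nat.mul_succ p m
        rw [if_pos hmn']
        have hpt : ∀ e ∈ Finset.Ico (d + 1) p, g (p * m + e) =
            X ^ (padicValNat p n + 1) * X ^ padicValNat p ((n - 1).choose m) := by
          intro e he
          rw [Finset.mem_Ico] at he
          have hle : p * m + e ≤ N := by omega
          simp only [hg, hf, if_pos hle]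
          rw [hN, valB p hp hd (by omega) he.2 hmn', pow_add]
        rw [Finset.sum_congr rfl hpt, Finset.sum_const, Nat.card_Ico,
          show p - (d + 1) = p - d - 1 by omega]
      · rw [if_neg hmn']
        apply Finset.sum_eq_zero
        intro e he
        rw [Finset.mem_Ico] at he
        have hmn'' : m = n := by omega
        have hpm : p * m = p * n := by rw [hmn'']
        have hno : ¬ p * m + e ≤ N := by rw [hN]; omega
        simp [hg, hno]
  rw [Finset.sum_congr rfl hinner, Finset.sum_add_distrib]
  congr 1
  · rw [T, Finset.mul_sum]
    apply Finset.sum_congr rfl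
    intro m _
    rw [nsmul_eq_mul, map_add, map_one, Polynomial.C_eq_natCast]
    push_cast
    ring
  · rw [Finset.sum_range_succ, if_neg (lt_irrefl n), add_zero,
      Finset.sum_congr rfl (fun m hm => if_pos (Finset.mem_range.mp hm))]
    have hcast : ((p - d - 1 : ℕ) : ℤ) = (p : ℤ) - d - 1 := by omega
    rw [T, show n - 1 + 1 = n by omega, Finset.mul_sum]
    apply Finset.sum_congr rfl
    intro m _
    rw [nsmul_eq_mul, show ((p - d - 1 : ℕ) : Polynomial ℤ) = C ((p : ℤ) - d - 1) by
      rw [← hcast, Polynomial.C_eq_natCast]]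
    ring
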